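/- Let ξ be a random variable with values in the positive integers, V a nonnegative real random variable, (X_i)_{i≥1} a sequence of i.i.d. real random variables, and U a positive-integer random variable, all defined on a common probability space. Assume: (V, (X_i)_{i≥1}) is independent of the pair (ξ, U); V is independent of (X_i)_{i≥1}; and, conditionally on ξ = n, U is uniformly distributed on {1, …, n}. Define W = V · X^{(U:ξ)}, where X^{(k:n)} denotes the k-th order statistic of (X_1, …, X_n). Then W is independent of ξ, and W has the same distribution as V · X_1. -/

import Mathlib

open MeasureTheory ProbabilityTheory
open scoped ENNReal

/-- The `k`-th order statistic (0-based) of the first `m` values of `v : ℕ → ℝ`: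
the entry of rank `k` in the nondecreasing rearrangement of `(v 0, …, v (m-1))`
(junk value `0` if `k ≥ m`). -/
noncomputable def orderStat (m : ℕ) (v : ℕ → ℝ) (k : ℕ) : ℝ :=
  if h : k < m then
    ((fun i : Fin m => v i) ∘ Tuple.sort (fun i : Fin m => v i)) ⟨k, h⟩
  else 0

open Finset in
lemma orderStat_le_iff {m k : ℕ} (hk : k < m) (v : ℕ → ℝ) (t : ℝ) :
    orderStat m v k ≤ t ↔ k + 1 ≤ #(univ.filter fun i : Fin m => v i ≤ t) := by
  set f : Fin m → ℝ := fun i => v i with hf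
  set σ := Tuple.sort f with hσ
  have hmono : Monotone (f ∘ σ) := Tuple.monotone_sort f
  have hcard : #(univ.filter fun i : Fin m => (f ∘ σ) i ≤ t)
      = #(univ.filter fun i : Fin m => f i ≤ t) := by
    apply Finset.card_bij (fun i _ => σ i)
    · intro a ha; simp only [mem_filter, mem_univ, true_and] at ha ⊢; exact ha
    · intro a _ b _ h; exact σ.injective h
    · intro b hb; refine ⟨σ.symm b, ?_, by simp⟩
      simp only [mem_filter, mem_univ, true_and, Function.comp_apply,
        Equiv.apply_symm_apply] at hb ⊢
      exact hb
  rw [orderStat, dif_pos hk, ← hcard]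
  constructor
  · intro h
    have hsub : Finset.Iic (⟨k, hk⟩ : Fin m) ⊆ univ.filter fun i => (f ∘ σ) i ≤ t := by
      intro i hi
      simp only [mem_Iic] at hi
      simp only [mem_filter, mem_univ, true_and]
      exact le_trans (hmono hi) h
    calc k + 1 = #(Finset.Iic (⟨k, hk⟩ : Fin m)) := by rw [Fin.card_Iic]
    _ ≤ _ := Finset.card_le_card hsub
  · intro h
    by_contra hlt
    push_neg at hlt
    have hsub : (univ.filter fun i => (f ∘ σ) i ≤ t) ⊆ Finset.Iio (⟨k, hk⟩ : Fin m) := by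
      intro i hi
      simp only [mem_filter, mem_univ, true_and] at hi
      simp only [mem_Iio]
      by_contra hge
      push_neg at hge
      exact absurd (le_trans (hmono hge) hi) (not_le.mpr hlt)
    have h2 := Finset.card_le_card hsub
    rw [Fin.card_Iio] at h2
    simp only [Fin.val_mk] at h2
    omega

lemma measurable_orderStat (m k : ℕ) : Measurable (fun v : ℕ → ℝ => orderStat m v k) := by
  by_cases hk : k < m
  · apply measurable_of_Iic
    intro t
    have : (fun v : ℕ → ℝ => orderStat m v k) ⁻¹' Set.Iic t
        = ⋃ S ∈ Finset.powersetCard (k+1) (Finset.univ : Finset (Fin m)),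
            ⋂ i ∈ S, {v : ℕ → ℝ | v i ≤ t} := by
      ext v
      simp only [Set.mem_preimage, Set.mem_Iic, orderStat_le_iff hk, Set.mem_iUnion,
        Set.mem_iInter, Finset.mem_powersetCard, Set.mem_setOf_eq]
      constructor
      · intro h
        obtain ⟨S, hS, hcard⟩ := Finset.exists_subset_card_eq h
        exact ⟨S, ⟨Finset.subset_univ S, hcard⟩,
          fun i hi => (Finset.mem_filter.mp (hS hi)).2⟩
      · rintro ⟨S, ⟨-, hcard⟩, h⟩
        calc k + 1 = S.card := hcard.symm
        _ ≤ _ := Finset.card_le_card fun i hi =>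
            Finset.mem_filter.mpr ⟨Finset.mem_univ i, h i hi⟩
    rw [this]
    apply MeasurableSet.biUnion (Finset.powersetCard (k+1) Finset.univ).countable_toSet
    intro S _
    apply MeasurableSet.biInter S.countable_toSet
    intro i _
    exact measurableSet_le (measurable_pi_apply _) measurable_const
  · simp only [orderStat, dif_neg hk]
    exact measurable_const

lemma sum_orderStat (n : ℕ) (v : ℕ → ℝ) (g : ℝ → ℝ≥0∞) :
    ∑ j ∈ Finset.range n, g (orderStat n v j) = ∑ i ∈ Finset.range n, g (v i) := by
  rw [← Fin.sum_univ_eq_sum_range (fun j => g (orderStat n v j)) n,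
    ← Fin.sum_univ_eq_sum_range (fun i => g (v i)) n]
  have : ∀ j : Fin n, orderStat n v j = v (Tuple.sort (fun i : Fin n => v i) j) := by
    intro j
    rw [orderStat, dif_pos j.isLt]
    rfl
  simp_rw [this]
  exact Equiv.sum_comp (Tuple.sort fun i : Fin n => v i) (fun i => g (v i))

lemma measurable_comp_countable' {Ω : Type*} [MeasurableSpace Ω] {ι : Type*} [Countable ι]
    [MeasurableSpace ι] [MeasurableSingletonClass ι]
    {f : Ω → ι} (hf : Measurable f) {h : ι → Ω → ℝ} (hh : ∀ i, Measurable (h i)) :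
    Measurable (fun x => h (f x) x) := by
  intro B hB
  have : (fun x => h (f x) x) ⁻¹' B = ⋃ i, (f ⁻¹' {i} ∩ (h i) ⁻¹' B) := by
    ext x
    simp only [Set.mem_preimage, Set.mem_iUnion, Set.mem_inter_iff, Set.mem_singleton_iff]
    exact ⟨fun hx => ⟨f x, rfl, hx⟩, by rintro ⟨i, rfl, hx⟩; exact hx⟩
  rw [this]
  exact MeasurableSet.iUnion fun i => (hf (measurableSet_singleton i)).inter (hh i hB)

theorem scaled_uniform_order_statistic_indep_of_size
    {Ω : Type*} [MeasurableSpace Ω] (μ : Measure Ω) [IsProbabilityMeasure μ]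
    (ξ U : Ω → ℕ) (V : Ω → ℝ) (X : ℕ → Ω → ℝ)
    (hξmeas : Measurable ξ) (hUmeas : Measurable U) (hVmeas : Measurable V)
    (hXmeas : ∀ i, Measurable (X i))
    (hξpos : ∀ x, 1 ≤ ξ x) (hVnonneg : ∀ x, 0 ≤ V x)
    (hiid : iIndepFun X μ)
    (hident : ∀ i, Measure.map (X i) μ = Measure.map (X 0) μ)
    (hindep₁ : IndepFun (fun x => (V x, fun i => X i x))
      (fun x => (ξ x, U x)) μ)
    (hindep₂ : IndepFun V (fun x => fun i => X i x) μ)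
    (hUcond : ∀ n k : ℕ, 1 ≤ k → k ≤ n →
      μ ({x | U x = k} ∩ {x | ξ x = n}) = μ {x | ξ x = n} / n) :
    IndepFun (fun x => V x * orderStat (ξ x) (fun i => X i x) (U x - 1)) ξ μ ∧
      Measure.map (fun x => V x * orderStat (ξ x) (fun i => X i x) (U x - 1)) μ
        = Measure.map (fun x => V x * X 0 x) μ := by
  -- notation
  set W : Ω → ℝ := fun x => V x * orderStat (ξ x) (fun i => X i x) (U x - 1) with hW
  set Z : Ω → ℝ := fun x => V x * X 0 x with hZ
  have hXpi : Measurable (fun x => fun i => X i x) :=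
    measurable_pi_lambda _ fun i => hXmeas i
  -- the per-(n,j) random variable
  set Y : ℕ → ℕ → Ω → ℝ := fun n j x => V x * orderStat n (fun i => X i x) j with hY
  have hYmeas : ∀ n j, Measurable (Y n j) := fun n j =>
    hVmeas.mul ((measurable_orderStat n j).comp hXpi)
  have hWmeas : Measurable W := by
    apply hVmeas.mul
    exact measurable_comp_countable' (hξmeas.prodMk hUmeas)
      (h := fun p : ℕ × ℕ => fun x => orderStat p.1 (fun i => X i x) (p.2 - 1))
      (fun p => (measurable_orderStat p.1 (p.2 - 1)).comp hXpi)
  have hZmeas : Measurable Z := hVmeas.mul (hXmeas 0)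
  -- Lemma D : V·X i has the same law as V·X 0
  have lemD : ∀ (B : Set ℝ), MeasurableSet B → ∀ i,
      μ ((fun x => V x * X i x) ⁻¹' B) = μ (Z ⁻¹' B) := by
    intro B hB i
    have hVXi : IndepFun V (X i) μ := hindep₂.comp measurable_id (measurable_pi_apply i)
    have hVX0 : IndepFun V (X 0) μ := hindep₂.comp measurable_id (measurable_pi_apply 0)
    have hmapi : Measure.map (fun x => (V x, X i x)) μ
        = (Measure.map V μ).prod (Measure.map (X i) μ) :=
      (indepFun_iff_map_prod_eq_prod_map_map hVmeas.aemeasurable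
        (hXmeas i).aemeasurable).mp hVXi
    have hmap0 : Measure.map (fun x => (V x, X 0 x)) μ
        = (Measure.map V μ).prod (Measure.map (X 0) μ) :=
      (indepFun_iff_map_prod_eq_prod_map_map hVmeas.aemeasurable
        (hXmeas 0).aemeasurable).mp hVX0
    have hA : MeasurableSet {p : ℝ × ℝ | p.1 * p.2 ∈ B} :=
      (measurable_fst.mul measurable_snd) hB
    have e1 : μ ((fun x => V x * X i x) ⁻¹' B)
        = Measure.map (fun x => (V x, X i x)) μ {p : ℝ × ℝ | p.1 * p.2 ∈ B} := by
      rw [Measure.map_apply (hVmeas.prodMk (hXmeas i)) hA]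
      rfl
    have e2 : μ (Z ⁻¹' B)
        = Measure.map (fun x => (V x, X 0 x)) μ {p : ℝ × ℝ | p.1 * p.2 ∈ B} := by
      rw [Measure.map_apply (hVmeas.prodMk (hXmeas 0)) hA]
      rfl
    rw [e1, e2, hmapi, hmap0, hident i]
  -- Lemma E : sum over order statistics
  have lemE : ∀ (B : Set ℝ), MeasurableSet B → ∀ n : ℕ,
      ∑ j ∈ Finset.range n, μ (Y n j ⁻¹' B) = n * μ (Z ⁻¹' B) := by
    intro B hB n
    have hind : ∀ (f : Ω → ℝ), Measurable f →
        μ (f ⁻¹' B) = ∫⁻ x, B.indicator (fun _ => (1 : ℝ≥0∞)) (f x) ∂μ := by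
      intro f hf
      rw [← lintegral_indicator_one (hf hB)]
      exact lintegral_congr fun a => rfl
    calc ∑ j ∈ Finset.range n, μ (Y n j ⁻¹' B)
        = ∑ j ∈ Finset.range n,
            ∫⁻ x, B.indicator (fun _ => (1 : ℝ≥0∞)) (Y n j x) ∂μ := by
          exact Finset.sum_congr rfl fun j _ => hind (Y n j) (hYmeas n j)
      _ = ∫⁻ x, ∑ j ∈ Finset.range n,
            B.indicator (fun _ => (1 : ℝ≥0∞)) (Y n j x) ∂μ := by
          rw [lintegral_finset_sum]
          exact fun j _ => (measurable_one.indicator hB).comp (hYmeas n j)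
      _ = ∫⁻ x, ∑ i ∈ Finset.range n,
            B.indicator (fun _ => (1 : ℝ≥0∞)) (V x * X i x) ∂μ := by
          congr 1
          ext x
          exact sum_orderStat n (fun i => X i x)
            (fun r => B.indicator (fun _ => (1 : ℝ≥0∞)) (V x * r))
      _ = ∑ i ∈ Finset.range n,
            ∫⁻ x, B.indicator (fun _ => (1 : ℝ≥0∞)) (V x * X i x) ∂μ := by
          rw [lintegral_finset_sum]
          exact fun i _ => (measurable_one.indicator hB).comp (hVmeas.mul (hXmeas i))
      _ = ∑ i ∈ Finset.range n, μ ((fun x => V x * X i x) ⁻¹' B) := by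
          exact Finset.sum_congr rfl fun i _ =>
            (hind (fun x => V x * X i x) (hVmeas.mul (hXmeas i))).symm
      _ = ∑ i ∈ Finset.range n, μ (Z ⁻¹' B) :=
          Finset.sum_congr rfl fun i _ => lemD B hB i
      _ = n * μ (Z ⁻¹' B) := by
          rw [Finset.sum_const, Finset.card_range, nsmul_eq_mul]
  -- Lemma C : independence of Y n j events from (ξ, U) events
  have lemC : ∀ (B : Set ℝ), MeasurableSet B → ∀ n j : ℕ,
      μ (Y n j ⁻¹' B ∩ ({x | U x = j + 1} ∩ {x | ξ x = n}))
        = μ (Y n j ⁻¹' B) * μ ({x | U x = j + 1} ∩ {x | ξ x = n}) := by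
    intro B hB n j
    have h := (indepFun_iff_measure_inter_preimage_eq_mul.mp hindep₁)
      {p : ℝ × (ℕ → ℝ) | p.1 * orderStat n p.2 j ∈ B} {(n, j + 1)}
      ((measurable_fst.mul ((measurable_orderStat n j).comp measurable_snd)) hB)
      (measurableSet_singleton _)
    have e1 : (fun x => (V x, fun i => X i x)) ⁻¹'
        {p : ℝ × (ℕ → ℝ) | p.1 * orderStat n p.2 j ∈ B} = Y n j ⁻¹' B := rfl
    have e2 : (fun x => (ξ x, U x)) ⁻¹' ({(n, j + 1)} : Set (ℕ × ℕ))
        = {x | U x = j + 1} ∩ {x | ξ x = n} := by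
      ext x
      simp only [Set.mem_preimage, Set.mem_singleton_iff, Prod.mk.injEq,
        Set.mem_inter_iff, Set.mem_setOf_eq]
      tauto
    rw [e1, e2] at h
    exact h
  -- basic facts about {ξ = n}
  have hAmeas : ∀ n : ℕ, MeasurableSet {x | ξ x = n} := fun n =>
    hξmeas (measurableSet_singleton n)
  have hAfin : ∀ n : ℕ, μ {x | ξ x = n} ≠ ∞ := fun n => measure_ne_top μ _
  -- Lemma G : the key identity
  have lemG : ∀ (B : Set ℝ), MeasurableSet B → ∀ n : ℕ,
      μ (W ⁻¹' B ∩ {x | ξ x = n}) = μ {x | ξ x = n} * μ (Z ⁻¹' B) := by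
    intro B hB n
    rcases Nat.eq_zero_or_pos n with hn | hn
    · subst hn
      have he : {x | ξ x = 0} = ∅ := by
        ext x
        simp only [Set.mem_setOf_eq, Set.mem_empty_iff_false, iff_false]
        exact fun h => absurd h (by have := hξpos x; omega)
      rw [he]
      simp
    · -- n ≥ 1
      have hn0 : (n : ℝ≥0∞) ≠ 0 := Nat.cast_ne_zero.mpr (by omega)
      have hnt : (n : ℝ≥0∞) ≠ ∞ := ENNReal.natCast_ne_top n
      set A := {x | ξ x = n} with hA
      set E := ⋃ k ∈ Finset.Icc 1 n, ({x | U x = k} ∩ A) with hE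
      have hUk : ∀ k : ℕ, MeasurableSet {x | U x = k} := fun k =>
        hUmeas (measurableSet_singleton k)
      have hEmeas : MeasurableSet E :=
        (Finset.Icc 1 n).measurableSet_biUnion fun k _ => (hUk k).inter (hAmeas n)
      have hdisj : (↑(Finset.Icc 1 n) : Set ℕ).PairwiseDisjoint
          (fun k => {x | U x = k} ∩ A) := by
        intro a _ b _ hab
        refine Set.disjoint_left.mpr fun x hx hx' => hab ?_
        rw [← hx.1, ← hx'.1]
      have hEμ : μ E = μ A := by
        rw [hE, measure_biUnion_finset hdisj fun k _ => (hUk k).inter (hAmeas n)]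
        have : ∀ k ∈ Finset.Icc 1 n, μ ({x | U x = k} ∩ A) = μ A / n := by
          intro k hk
          rw [Finset.mem_Icc] at hk
          exact hUcond n k hk.1 hk.2
        rw [Finset.sum_congr rfl this, Finset.sum_const, Nat.card_Icc]
        simp only [Nat.add_sub_cancel, nsmul_eq_mul]
        exact ENNReal.mul_div_cancel hn0 hnt
      have hEsub : E ⊆ A := by
        intro x hx
        simp only [hE, Set.mem_iUnion] at hx
        obtain ⟨k, _, _, hxA⟩ := hx
        exact hxA
      have hnull : μ (A \ E) = 0 := by
        rw [measure_diff hEsub hEmeas.nullMeasurableSet (hEμ ▸ hAfin n), hEμ, tsub_self]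
      -- split
      have hsplit : μ (W ⁻¹' B ∩ A) = μ (W ⁻¹' B ∩ A ∩ E) := by
        have h1 : W ⁻¹' B ∩ A ⊆ (W ⁻¹' B ∩ A ∩ E) ∪ (A \ E) := by
          intro x hx
          by_cases hxE : x ∈ E
          · exact Or.inl ⟨hx, hxE⟩
          · exact Or.inr ⟨hx.2, hxE⟩
        refine le_antisymm ?_ (measure_mono Set.inter_subset_left)
        calc μ (W ⁻¹' B ∩ A) ≤ μ ((W ⁻¹' B ∩ A ∩ E) ∪ (A \ E)) := measure_mono h1
        _ ≤ μ (W ⁻¹' B ∩ A ∩ E) + μ (A \ E) := measure_union_le _ _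
        _ = μ (W ⁻¹' B ∩ A ∩ E) := by rw [hnull, add_zero]
      have hdecomp : W ⁻¹' B ∩ A ∩ E
          = ⋃ k ∈ Finset.Icc 1 n, (Y n (k - 1) ⁻¹' B ∩ ({x | U x = k} ∩ A)) := by
        ext x
        simp only [Set.mem_inter_iff, Set.mem_iUnion, Set.mem_preimage, Set.mem_setOf_eq,
          hE, exists_prop]
        constructor
        · rintro ⟨⟨hxB, hxA⟩, k, hk, hxU, -⟩
          refine ⟨k, hk, ?_, hxU, hxA⟩
          have : W x = Y n (k - 1) x := by
            simp only [hW, hY]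
            rw [hxA, hxU]
          rwa [← this]
        · rintro ⟨k, hk, hxB, hxU, hxA⟩
          have : W x = Y n (k - 1) x := by
            simp only [hW, hY]
            rw [hxA, hxU]
          exact ⟨⟨this ▸ hxB, hxA⟩, k, hk, hxU, hxA⟩
      have hdisj2 : (↑(Finset.Icc 1 n) : Set ℕ).PairwiseDisjoint
          (fun k => Y n (k - 1) ⁻¹' B ∩ ({x | U x = k} ∩ A)) := by
        intro a _ b _ hab
        refine Set.disjoint_left.mpr fun x hx hx' => hab ?_
        rw [← hx.2.1, ← hx'.2.1]
      calc μ (W ⁻¹' B ∩ A) = μ (W ⁻¹' B ∩ A ∩ E) := hsplit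
      _ = ∑ k ∈ Finset.Icc 1 n, μ (Y n (k - 1) ⁻¹' B ∩ ({x | U x = k} ∩ A)) := by
          rw [hdecomp, measure_biUnion_finset hdisj2
            fun k _ => ((hYmeas n (k - 1)) hB).inter ((hUk k).inter (hAmeas n))]
      _ = ∑ k ∈ Finset.Icc 1 n, μ (Y n (k - 1) ⁻¹' B) * (μ A / n) := by
          refine Finset.sum_congr rfl fun k hk => ?_
          rw [Finset.mem_Icc] at hk
          have hk1 : k - 1 + 1 = k := by omega
          have hC := lemC B hB n (k - 1)
          rw [hk1] at hC
          rw [hC, hUcond n k hk.1 hk.2]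
      _ = (∑ j ∈ Finset.range n, μ (Y n j ⁻¹' B)) * (μ A / n) := by
          rw [← Finset.sum_mul]
          congr 1
          refine Finset.sum_nbij' (fun k => k - 1) (fun j => j + 1) ?_ ?_ ?_ ?_ ?_
          · intro k hk; rw [Finset.mem_Icc] at hk; rw [Finset.mem_range]; omega
          · intro j hj; rw [Finset.mem_range] at hj; rw [Finset.mem_Icc]; omega
          · intro k hk; rw [Finset.mem_Icc] at hk; omega
          · intro j _; omega
          · intro k _; dsimp only
      _ = μ A * μ (Z ⁻¹' B) := by
          rw [lemE B hB n]
          rw [mul_comm (↑n) (μ (Z ⁻¹' B)), mul_assoc,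
            ENNReal.mul_div_cancel hn0 hnt, mul_comm]
  -- Lemma H : the law of W is that of Z
  have lemH : ∀ (B : Set ℝ), MeasurableSet B → μ (W ⁻¹' B) = μ (Z ⁻¹' B) := by
    intro B hB
    have hcover : W ⁻¹' B = ⋃ n : ℕ, (W ⁻¹' B ∩ {x | ξ x = n}) := by
      ext x
      simp only [Set.mem_iUnion, Set.mem_inter_iff, Set.mem_setOf_eq]
      exact ⟨fun hx => ⟨ξ x, hx, rfl⟩, fun ⟨n, hx, _⟩ => hx⟩
    have hdisj : Pairwise (Function.onFun Disjoint fun n => W ⁻¹' B ∩ {x | ξ x = n}) := by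
      intro a b hab
      refine Set.disjoint_left.mpr fun x hx hx' => hab ?_
      rw [← hx.2, ← hx'.2]
    rw [hcover, measure_iUnion hdisj fun n => (hWmeas hB).inter (hAmeas n)]
    simp_rw [fun n => lemG B hB n]
    rw [ENNReal.tsum_mul_right]
    have : ∑' n : ℕ, μ {x | ξ x = n} = 1 := by
      have hd : Pairwise (Function.onFun Disjoint fun n : ℕ => {x | ξ x = n}) := by
        intro a b hab
        refine Set.disjoint_left.mpr fun x hx hx' => hab ?_
        rw [← hx, ← hx']
      rw [← measure_iUnion hd hAmeas]
      have : ⋃ n : ℕ, {x | ξ x = n} = Set.univ := by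
        ext x; simp
      rw [this, measure_univ]
    rw [this, one_mul]
  constructor
  · rw [indepFun_iff_measure_inter_preimage_eq_mul]
    intro s t hs ht
    have hξt : ξ ⁻¹' t = ⋃ n ∈ t, {x | ξ x = n} := by
      ext x
      simp only [Set.mem_preimage, Set.mem_iUnion, Set.mem_setOf_eq, exists_prop]
      exact ⟨fun hx => ⟨ξ x, hx, rfl⟩, by rintro ⟨n, hn, rfl⟩; exact hn⟩
    have hint : W ⁻¹' s ∩ ξ ⁻¹' t = ⋃ n ∈ t, (W ⁻¹' s ∩ {x | ξ x = n}) := by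
      rw [hξt, Set.inter_iUnion₂]
    have hd1 : t.PairwiseDisjoint (fun n => W ⁻¹' s ∩ {x | ξ x = n}) := by
      intro a _ b _ hab
      refine Set.disjoint_left.mpr fun x hx hx' => hab ?_
      rw [← hx.2, ← hx'.2]
    have hd2 : t.PairwiseDisjoint (fun n : ℕ => {x | ξ x = n}) := by
      intro a _ b _ hab
      refine Set.disjoint_left.mpr fun x hx hx' => hab ?_
      rw [← hx, ← hx']
    have hct : t.Countable := t.to_countable
    rw [hint, measure_biUnion hct hd1 fun n _ => (hWmeas hs).inter (hAmeas n)]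
    calc (∑' n : t, μ (W ⁻¹' s ∩ {x | ξ x = ↑n}))
        = ∑' n : t, μ {x | ξ x = ↑n} * μ (Z ⁻¹' s) :=
          tsum_congr fun n => lemG s hs n
      _ = (∑' n : t, μ {x | ξ x = ↑n}) * μ (Z ⁻¹' s) := ENNReal.tsum_mul_right
      _ = μ (ξ ⁻¹' t) * μ (Z ⁻¹' s) := by
          rw [hξt, measure_biUnion hct hd2 fun n _ => hAmeas n]
      _ = μ (W ⁻¹' s) * μ (ξ ⁻¹' t) := by
          rw [lemH s hs, mul_comm]
  · refine Measure.ext fun s hs => ?_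
    rw [Measure.map_apply hWmeas hs, Measure.map_apply hZmeas hs]
    exact lemH s hs
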